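/- Let S be a countable scattered chain of infinite Hausdorff rank, i.e., for every n ∈ ℕ the n-fold iterated finite condensation S^[n] has more than one element. Then there exists an infinite sequence δ = (δ_0, δ_1, δ_2, …) ∈ {+, −}^ω such that for every k ≥ 1 the chain ω^(δ↾k) = ω^(δ_0)·ω^(δ_1)·⋯·ω^(δ_{k−1}) embeds into S. -/

import Mathlib

/-- `iterRel n x y` holds iff `x` and `y` are identified in the `n`-fold iterated finite
condensation `S^[n]` of the chain (where `S^[0] = S` and `S^[k+1] = S^[k]/θ`, `θ` being the
relation "the closed interval between the two points is finite").  Indeed, `x, y` are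
identified in `S^[k+1]` iff the interval between their images in `S^[k]` is finite, i.e.
iff the interval `[x ⊓ y, x ⊔ y]` of `S` is covered by finitely many `iterRel k`-classes. -/
def iterRel {α : Type*} [LinearOrder α] : ℕ → α → α → Prop
  | 0 => fun x y => x = y
  | k + 1 => fun x y => ∃ F : Finset α, ∀ z ∈ Set.uIcc x y, ∃ w ∈ F, iterRel k z w

/-- `ω` if `b = true`, `ω* = ℕᵒᵈ` if `b = false`. -/
abbrev OmegaSign : Bool → Type
  | true => ℕ
  | false => ℕᵒᵈ

instance instOmegaSignLO : ∀ b : Bool, LinearOrder (OmegaSign b)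
  | true => inferInstanceAs (LinearOrder ℕ)
  | false => inferInstanceAs (LinearOrder ℕᵒᵈ)

/-- The chain `ω^(δ↾k) = ω^(δ 0) · ω^(δ 1) · ⋯ · ω^(δ (k-1))`, where the product `A·B` of
chains is the lexicographic sum `Σ_{a∈A} B = A ×ₗ B`, associating to the left
(`OmegaPow δ 0` is the one-element chain, a neutral factor). -/
def OmegaPow (δ : ℕ → Bool) : ℕ → Type
  | 0 => PUnit
  | k + 1 => (OmegaPow δ k) ×ₗ (OmegaSign (δ k))

instance instOmegaPowLO (δ : ℕ → Bool) : ∀ k : ℕ, LinearOrder (OmegaPow δ k)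
  | 0 => inferInstanceAs (LinearOrder PUnit)
  | k + 1 =>
    @Prod.Lex.instLinearOrder (OmegaPow δ k) (OmegaSign (δ k)) (instOmegaPowLO δ k) (instOmegaSignLO (δ k))

section Aux

lemma iterRel_refl {α : Type*} [LinearOrder α] : ∀ (k : ℕ) (x : α), iterRel k x x
  | 0, x => rfl
  | k + 1, x => ⟨{x}, fun z hz => ⟨x, Finset.mem_singleton_self x, by
      simp only [Set.uIcc_self, Set.mem_singleton_iff] at hz
      exact hz ▸ iterRel_refl k x⟩⟩

lemma iterRel_symm {α : Type*} [LinearOrder α] : ∀ (k : ℕ) (x y : α), iterRel k x y → iterRel k y x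
  | 0, x, y, h => h.symm
  | k + 1, x, y, ⟨F, hF⟩ => ⟨F, fun z hz => hF z (Set.uIcc_comm y x ▸ hz)⟩

/-- Map a lex product along an embedding of the first factor. -/
def lexMapLeft {A B C : Type*} [LinearOrder A] [LinearOrder B] [LinearOrder C]
    (e : A ↪o B) : (A ×ₗ C) ↪o (B ×ₗ C) :=
  OrderEmbedding.ofStrictMono (fun p => toLex (e (ofLex p).1, (ofLex p).2)) (by
    intro p q h
    have h' := (Prod.Lex.toLex_lt_toLex (x := (ofLex p)) (y := (ofLex q))).mp h
    refine Prod.Lex.toLex_lt_toLex.mpr ?_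
    rcases h' with h1 | ⟨h1, h2⟩
    · exact Or.inl (e.strictMono h1)
    · exact Or.inr ⟨by rw [h1], h2⟩)

/-- Lex product associativity, as an embedding. -/
def lexAssoc {A B C : Type*} [LinearOrder A] [LinearOrder B] [LinearOrder C] :
    (A ×ₗ (B ×ₗ C)) ↪o ((A ×ₗ B) ×ₗ C) :=
  OrderEmbedding.ofStrictMono
    (fun p => toLex (toLex ((ofLex p).1, (ofLex (ofLex p).2).1), (ofLex (ofLex p).2).2)) (by
    rintro ⟨a, b, c⟩ ⟨a', b', c'⟩ h
    have h' := (Prod.Lex.toLex_lt_toLex (x := (a, toLex (b, c))) (y := (a', toLex (b', c')))).mp h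
    refine Prod.Lex.toLex_lt_toLex.mpr ?_
    rcases h' with h1 | ⟨h1, h2⟩
    · exact Or.inl (Prod.Lex.toLex_lt_toLex.mpr (Or.inl h1))
    · dsimp at h1
      have h2' := (Prod.Lex.toLex_lt_toLex (x := (b, c)) (y := (b', c'))).mp h2
      rcases h2' with h3 | ⟨h3, h4⟩
      · subst h1; exact Or.inl (Prod.Lex.toLex_lt_toLex.mpr (Or.inr ⟨rfl, h3⟩))
      · dsimp at h3 h4
        subst h1; subst h3; exact Or.inr ⟨rfl, h4⟩)

/-- swap with PUnit -/
def punitSwap {C : Type*} [LinearOrder C] : (C ×ₗ PUnit) ↪o (PUnit ×ₗ C) :=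
  OrderEmbedding.ofStrictMono (fun p => toLex (PUnit.unit, (ofLex p).1)) (by
    intro p q h
    have h' := (Prod.Lex.toLex_lt_toLex (x := (ofLex p)) (y := (ofLex q))).mp h
    refine Prod.Lex.toLex_lt_toLex.mpr ?_
    rcases h' with h1 | ⟨h1, h2⟩
    · exact Or.inr ⟨rfl, h1⟩
    · exact absurd h2 (by simp))

end Aux

section OmegaPowLemmas

instance omegaSignNonempty : ∀ b : Bool, Nonempty (OmegaSign b)
  | true => ⟨(0 : ℕ)⟩
  | false => ⟨(0 : ℕ)⟩

/-- Prepend a sign to a sequence. -/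
def consB (b : Bool) (δ : ℕ → Bool) : ℕ → Bool
  | 0 => b
  | i + 1 => δ i

/-- `ω^(b) · ω^(δ↾k)` embeds into `ω^((b::δ)↾(k+1))`. -/
def omegaPowCons (b : Bool) (δ : ℕ → Bool) : ∀ k : ℕ,
    ((OmegaSign b) ×ₗ (OmegaPow δ k)) ↪o (OmegaPow (consB b δ) (k + 1))
  | 0 => punitSwap
  | k + 1 =>
    (lexAssoc.trans (lexMapLeft (omegaPowCons b δ k) : _ ↪o _))

/-- If two sequences agree below `k`, the corresponding powers embed. -/
def omegaPowCongr : ∀ (k : ℕ) (δ₁ δ₂ : ℕ → Bool), (∀ i, i < k → δ₁ i = δ₂ i) →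
    Nonempty ((OmegaPow δ₁ k) ↪o (OmegaPow δ₂ k))
  | 0, _, _, _ => ⟨OrderEmbedding.ofStrictMono id fun a b h => h⟩
  | k + 1, δ₁, δ₂, h => by
    obtain ⟨e⟩ := omegaPowCongr k δ₁ δ₂ (fun i hi => h i (hi.trans (Nat.lt_succ_self k)))
    have hk : δ₁ k = δ₂ k := h k (Nat.lt_succ_self k)
    show Nonempty ((OmegaPow δ₁ k ×ₗ OmegaSign (δ₁ k)) ↪o (OmegaPow δ₂ k ×ₗ OmegaSign (δ₂ k)))
    rw [hk]
    exact ⟨lexMapLeft e⟩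

/-- `ω^(δ↾k)` embeds into `ω^(δ↾(k+1))`. -/
noncomputable def omegaPowSucc (δ : ℕ → Bool) (k : ℕ) : (OmegaPow δ k) ↪o (OmegaPow δ (k + 1)) :=
  let z := Classical.arbitrary (OmegaSign (δ k))
  OrderEmbedding.ofStrictMono (fun u => toLex (u, z)) (by
    intro u v h
    exact Prod.Lex.toLex_lt_toLex.mpr (Or.inl h))

noncomputable def omegaPowLe (δ : ℕ → Bool) : ∀ {m k : ℕ}, m ≤ k → (OmegaPow δ m) ↪o (OmegaPow δ k) := by
  intro m k h
  induction k with
  | zero => exact (Nat.le_zero.mp h) ▸ OrderEmbedding.ofStrictMono id fun a b h => h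
  | succ k ih =>
    by_cases h' : m = k + 1
    · subst h'
      exact OrderEmbedding.ofStrictMono id fun a b h => h
    · exact (ih (Nat.lt_succ_iff.mp (Nat.lt_of_le_of_ne h h'))).trans (omegaPowSucc δ k)

end OmegaPowLemmas

section Rev

def punitSwap' {C : Type*} [LinearOrder C] : (PUnit ×ₗ C) ↪o (C ×ₗ PUnit) :=
  OrderEmbedding.ofStrictMono (fun p => toLex ((ofLex p).2, PUnit.unit)) (by
    intro p q h
    have h' := (Prod.Lex.toLex_lt_toLex (x := (ofLex p)) (y := (ofLex q))).mp h
    refine Prod.Lex.toLex_lt_toLex.mpr ?_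
    rcases h' with h1 | ⟨h1, h2⟩
    · exact absurd h1 (by simp)
    · exact Or.inl h2)

def lexAssocRev {A B C : Type*} [LinearOrder A] [LinearOrder B] [LinearOrder C] :
    ((A ×ₗ B) ×ₗ C) ↪o (A ×ₗ (B ×ₗ C)) :=
  OrderEmbedding.ofStrictMono
    (fun p => toLex ((ofLex (ofLex p).1).1, toLex ((ofLex (ofLex p).1).2, (ofLex p).2))) (by
    rintro ⟨⟨a, b⟩, c⟩ ⟨⟨a', b'⟩, c'⟩ h
    have h' := (Prod.Lex.toLex_lt_toLex (x := (toLex (a, b), c)) (y := (toLex (a', b'), c'))).mp h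
    refine Prod.Lex.toLex_lt_toLex.mpr ?_
    rcases h' with h1 | ⟨h1, h2⟩
    · have h1' := (Prod.Lex.toLex_lt_toLex (x := (a, b)) (y := (a', b'))).mp h1
      rcases h1' with h3 | ⟨h3, h4⟩
      · exact Or.inl h3
      · dsimp at h3 h4
        subst h3
        exact Or.inr ⟨rfl, Prod.Lex.toLex_lt_toLex.mpr (Or.inl h4)⟩
    · dsimp at h1 h2
      have hab : a = a' ∧ b = b' := by
        have := congrArg ofLex h1
        exact ⟨congrArg Prod.fst this, congrArg Prod.snd this⟩
      obtain ⟨h3, h4⟩ := hab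
      subst h3; subst h4
      exact Or.inr ⟨rfl, Prod.Lex.toLex_lt_toLex.mpr (Or.inr ⟨rfl, h2⟩)⟩)

/-- Reverse of `omegaPowCons`. -/
def omegaPowConsRev (b : Bool) (δ : ℕ → Bool) : ∀ k : ℕ,
    (OmegaPow (consB b δ) (k + 1)) ↪o ((OmegaSign b) ×ₗ (OmegaPow δ k))
  | 0 => punitSwap'
  | k + 1 => (lexMapLeft (omegaPowConsRev b δ k)).trans lexAssocRev

end Rev

section Combine

noncomputable def combineNat {α A : Type*} [LinearOrder α] [LinearOrder A]
    (lo hi : ℕ → α) (E : ℕ → A ↪o α)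
    (hsep : ∀ i j, i < j → hi i < lo j)
    (hE : ∀ n u, E n u ∈ Set.Icc (lo n) (hi n)) : (ℕ ×ₗ A) ↪o α :=
  OrderEmbedding.ofStrictMono (fun p => E (ofLex p).1 (ofLex p).2) (by
    rintro ⟨n, u⟩ ⟨n', u'⟩ h
    have h' := (Prod.Lex.toLex_lt_toLex (x := (n, u)) (y := (n', u'))).mp h
    rcases h' with h1 | ⟨h1, h2⟩
    · dsimp at h1 ⊢
      calc E n u ≤ hi n := (hE n u).2
        _ < lo n' := hsep n n' h1
        _ ≤ E n' u' := (hE n' u').1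
    · dsimp at h1 h2 ⊢
      subst h1
      exact (E n).strictMono h2)

noncomputable def combineNatDual {α A : Type*} [LinearOrder α] [LinearOrder A]
    (lo hi : ℕ → α) (E : ℕ → A ↪o α)
    (hsep : ∀ i j, i < j → hi j < lo i)
    (hE : ∀ n u, E n u ∈ Set.Icc (lo n) (hi n)) : (ℕᵒᵈ ×ₗ A) ↪o α :=
  OrderEmbedding.ofStrictMono
    (fun p => E (OrderDual.ofDual (ofLex p).1) (ofLex p).2) (by
    rintro ⟨n, u⟩ ⟨n', u'⟩ h
    have h' := (Prod.Lex.toLex_lt_toLex (x := (n, u)) (y := (n', u'))).mp h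
    rcases h' with h1 | ⟨h1, h2⟩
    · dsimp at h1 ⊢
      have h1' : (OrderDual.ofDual n' : ℕ) < OrderDual.ofDual n := h1
      calc E (OrderDual.ofDual n) u ≤ hi (OrderDual.ofDual n) := (hE _ u).2
        _ < lo (OrderDual.ofDual n') := hsep _ _ h1'
        _ ≤ E (OrderDual.ofDual n') u' := (hE _ u').1
    · dsimp at h1 h2 ⊢
      subst h1
      exact (E _).strictMono h2)

end Combine

section Main

variable {α : Type*} [LinearOrder α]

lemma main_lemma (k : ℕ) : ∀ x y : α, ¬ iterRel k x y →
    ∃ δ : ℕ → Bool, ∃ e : OmegaPow δ k ↪o α, ∀ u, e u ∈ Set.uIcc x y := by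
  induction k with
  | zero =>
    intro x y _
    haveI : Subsingleton (OmegaPow (fun _ => true) 0) := inferInstanceAs (Subsingleton PUnit)
    refine ⟨fun _ => true,
      OrderEmbedding.ofStrictMono (fun _ => x) (fun u v h => absurd (Subsingleton.elim u v) (ne_of_lt h)),
      fun _ => Set.left_mem_uIcc⟩
  | succ k IH =>
    intro x y h
    -- extract infinitely many pairwise non-`iterRel k`-related points in `uIcc x y`
    have key : ∀ G : Finset α, ∃ z, z ∈ Set.uIcc x y ∧ ∀ w ∈ G, ¬ iterRel k z w := by
      intro G
      by_contra hc
      push_neg at hc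
      exact h ⟨G, hc⟩
    choose pick hmem hfree using key
    let S : ℕ → Finset α := fun n => Nat.rec ∅ (fun _ G => insert (pick G) G) n
    set f : ℕ → α := fun n => pick (S n) with hf
    have hSmono : ∀ m n, m ≤ n → S m ⊆ S n := by
      intro m n hmn
      induction n with
      | zero => rw [Nat.le_zero.mp hmn]
      | succ n ihn =>
        rcases Nat.lt_or_ge m (n+1) with h' | h'
        · exact (ihn (Nat.lt_succ_iff.mp h')).trans (Finset.subset_insert _ _)
        · rw [le_antisymm hmn h']
    have hmemS : ∀ m n, m < n → f m ∈ S n :=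
      fun m n hmn => hSmono (m+1) n hmn (Finset.mem_insert_self _ _)
    have hfne : ∀ m n, m ≠ n → ¬ iterRel k (f m) (f n) := by
      intro m n hmn hrel
      rcases lt_or_gt_of_ne hmn with hlt | hgt
      · exact hfree (S n) (f m) (hmemS m n hlt) (iterRel_symm k _ _ hrel)
      · exact hfree (S m) (f n) (hmemS n m hgt) hrel
    haveI : IsTrans α (· < ·) := ⟨fun _ _ _ => lt_trans⟩
    obtain ⟨g, hg⟩ := exists_increasing_or_nonincreasing_subseq (· < ·) f
    set a : ℕ → α := fun n => f (g n) with ha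
    have hane : ∀ m n, m ≠ n → ¬ iterRel k (a m) (a n) :=
      fun m n hmn => hfne _ _ (fun e => hmn (g.injective e))
    have hamem : ∀ n, a n ∈ Set.uIcc x y := fun n => hmem _
    have IH2 : ∀ n : ℕ, ∃ δ : ℕ → Bool, ∃ e : OmegaPow δ k ↪o α,
        ∀ u, e u ∈ Set.uIcc (a (2*n)) (a (2*n+1)) :=
      fun n => IH _ _ (hane _ _ (by omega))
    choose δs es hes using IH2
    -- pigeonhole on the first `k` signs
    let v : ℕ → (Fin k → Bool) := fun n i => δs n i
    obtain ⟨v0, hv0⟩ := Finite.exists_infinite_fiber v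
    have hv0' : (setOf (fun n => v n = v0)).Infinite := by
      rw [← Set.infinite_coe_iff] at *
      exact hv0
    set m : ℕ → ℕ := Nat.nth (fun n => v n = v0) with hm
    have hmmono : StrictMono m := Nat.nth_strictMono hv0'
    have hmv : ∀ j, v (m j) = v0 := fun j => Nat.nth_mem_of_infinite hv0' j
    rcases hg with hinc | hnotinc
    · -- increasing case : sign `true`
      set δ' : ℕ → Bool := fun i => if h : i < k then v0 ⟨i, h⟩ else true with hδ'
      have hagree : ∀ j i, i < k → δ' i = δs (m j) i := by
        intro j i hi
        rw [hδ']
        simp only [dif_pos hi]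
        rw [← hmv j]
      set E : ℕ → OmegaPow δ' k ↪o α :=
        fun j => ((omegaPowCongr k δ' (δs (m j)) (hagree j)).some).trans (es (m j)) with hE
      have hEmem : ∀ j u, E j u ∈ Set.Icc (a (2*(m j))) (a (2*(m j)+1)) := by
        intro j u
        have := hes (m j) (((omegaPowCongr k δ' (δs (m j)) (hagree j)).some) u)
        rwa [Set.uIcc_of_le (le_of_lt (hinc _ _ (by omega)))] at this
      have hsep : ∀ i j, i < j → a (2*(m i)+1) < a (2*(m j)) :=
        fun i j hij => hinc _ _ (by have := hmmono hij; omega)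
      set W : (ℕ ×ₗ OmegaPow δ' k) ↪o α :=
        combineNat (fun j => a (2*(m j))) (fun j => a (2*(m j)+1)) E hsep hEmem with hW
      refine ⟨consB true δ', (omegaPowConsRev true δ' k).trans W, fun u => ?_⟩
      show W ((omegaPowConsRev true δ' k) u) ∈ _
      set p := (omegaPowConsRev true δ' k) u
      have : W p = E (ofLex p).1 (ofLex p).2 := rfl
      rw [this]
      have h1 := hEmem (ofLex p).1 (ofLex p).2
      exact Set.uIcc_subset_uIcc (hamem _) (hamem _) (Set.Icc_subset_uIcc h1)
    · -- decreasing case : sign `false`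
      have hdec : ∀ m' n, m' < n → a n < a m' := by
        intro m' n hmn
        refine lt_of_le_of_ne (not_lt.mp (hnotinc m' n hmn)) (fun e => ?_)
        exact hane n m' (by omega) (e ▸ iterRel_refl k _)
      set δ' : ℕ → Bool := fun i => if h : i < k then v0 ⟨i, h⟩ else false with hδ'
      have hagree : ∀ j i, i < k → δ' i = δs (m j) i := by
        intro j i hi
        rw [hδ']
        simp only [dif_pos hi]
        rw [← hmv j]
      set E : ℕ → OmegaPow δ' k ↪o α :=
        fun j => ((omegaPowCongr k δ' (δs (m j)) (hagree j)).some).trans (es (m j)) with hE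
      have hEmem : ∀ j u, E j u ∈ Set.Icc (a (2*(m j)+1)) (a (2*(m j))) := by
        intro j u
        have := hes (m j) (((omegaPowCongr k δ' (δs (m j)) (hagree j)).some) u)
        rwa [Set.uIcc_comm, Set.uIcc_of_le (le_of_lt (hdec _ _ (by omega)))] at this
      have hsep : ∀ i j, i < j → a (2*(m j)) < a (2*(m i)+1) :=
        fun i j hij => hdec _ _ (by have := hmmono hij; omega)
      set W : (ℕᵒᵈ ×ₗ OmegaPow δ' k) ↪o α :=
        combineNatDual (fun j => a (2*(m j)+1)) (fun j => a (2*(m j))) E hsep hEmem with hW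
      refine ⟨consB false δ', (omegaPowConsRev false δ' k).trans W, fun u => ?_⟩
      show W ((omegaPowConsRev false δ' k) u) ∈ _
      set p := (omegaPowConsRev false δ' k) u
      have : W p = E (OrderDual.ofDual (ofLex p).1) (ofLex p).2 := rfl
      rw [this]
      have h1 := hEmem (OrderDual.ofDual (ofLex p).1) (ofLex p).2
      exact Set.uIcc_subset_uIcc (hamem _) (hamem _) (Set.Icc_subset_uIcc h1)

end Main

section Konig

variable (α : Type*) [LinearOrder α]

def good (n : ℕ) (δ : ℕ → Bool) : Prop := Nonempty (OmegaPow δ n ↪o α)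

variable {α}

lemma good_mono {n N : ℕ} (h : n ≤ N) {δ : ℕ → Bool} (hg : good α N δ) : good α n δ :=
  hg.elim fun e => ⟨(omegaPowLe δ h).trans e⟩

lemma good_congr {n : ℕ} {δ₁ δ₂ : ℕ → Bool} (h : ∀ i, i < n → δ₁ i = δ₂ i)
    (hg : good α n δ₁) : good α n δ₂ := by
  obtain ⟨e'⟩ := omegaPowCongr n δ₂ δ₁ (fun i hi => (h i hi).symm)
  exact hg.elim fun e => ⟨e'.trans e⟩

variable (α)

def ExtAll (n : ℕ) (f : ℕ → Bool) : Prop :=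
  ∀ N, ∃ δ, (∀ i, i < n → δ i = f i) ∧ good α N δ

variable {α}

lemma ext_step {n : ℕ} {f : ℕ → Bool} (h : ExtAll α n f) :
    ∃ b, ExtAll α (n + 1) (Function.update f n b) := by
  by_contra hc
  push_neg at hc
  have ht := hc true
  have hf := hc false
  unfold ExtAll at ht hf
  push_neg at ht hf
  obtain ⟨Nt, hNt⟩ := ht
  obtain ⟨Nf, hNf⟩ := hf
  obtain ⟨δ, hδ1, hδ2⟩ := h (max Nt Nf)
  have hag : ∀ b, δ n = b → ∀ i, i < n + 1 → δ i = Function.update f n b i := by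
    intro b hb i hi
    rcases Nat.lt_or_ge i n with h' | h'
    · rw [Function.update_of_ne (by omega) _ _, hδ1 i h']
    · have : i = n := by omega
      subst this
      rw [Function.update_self]
      exact hb
  rcases Bool.eq_false_or_eq_true (δ n) with hb | hb
  · exact hNt δ (hag true hb) (good_mono (le_max_left _ _) hδ2)
  · exact hNf δ (hag false hb) (good_mono (le_max_right _ _) hδ2)

end Konig

theorem statement9' {α : Type*} [LinearOrder α]
    (hrank : ∀ n : ℕ, ∃ x y : α, ¬ iterRel n x y) :
    ∃ δ : ℕ → Bool, ∀ k : ℕ, 1 ≤ k → Nonempty (OmegaPow δ k ↪o α) := by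
  have hgood : ∀ N, ∃ δ, good α N δ := by
    intro N
    obtain ⟨x, y, hxy⟩ := hrank N
    obtain ⟨δ, e, -⟩ := main_lemma N x y hxy
    exact ⟨δ, ⟨e⟩⟩
  have h0 : ExtAll α 0 (fun _ => true) :=
    fun N => (hgood N).imp fun δ hδ => ⟨fun i hi => absurd hi (Nat.not_lt_zero i), hδ⟩
  let D : ∀ n : ℕ, {f : ℕ → Bool // ExtAll α n f} := fun n =>
    Nat.rec ⟨fun _ => true, h0⟩
      (fun n p => ⟨Function.update p.1 n (ext_step p.2).choose, (ext_step p.2).choose_spec⟩) n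
  have hD : ∀ n, (D (n+1)).1 = Function.update (D n).1 n (ext_step (D n).2).choose :=
    fun n => rfl
  set δstar : ℕ → Bool := fun n => (D (n+1)).1 n with hδstar
  have hcoh : ∀ n i, i < n → (D n).1 i = δstar i := by
    intro n
    induction n with
    | zero => intro i hi; exact absurd hi (Nat.not_lt_zero i)
    | succ n ihn =>
      intro i hi
      rcases Nat.lt_or_ge i n with h' | h'
      · rw [hD n, Function.update_of_ne (by omega) _ _]
        exact ihn i h'
      · have : i = n := by omega
        subst this
        rfl
  refine ⟨δstar, fun k _ => ?_⟩
  obtain ⟨δ, hag, hg⟩ := (D k).2 k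
  exact good_congr (fun i hi => (hag i hi).trans (hcoh k i hi)) hg


/-- For a countable scattered chain `S` of infinite Hausdorff rank (every iterated finite
condensation `S^[n]` has more than one element), there is a sequence `δ ∈ {+,-}^ω` such
that `ω^(δ↾k)` embeds into `S` for every `k ≥ 1`. -/
theorem statement9 {α : Type*} [LinearOrder α] [Countable α]
    (hscat : IsEmpty (ℚ ↪o α))
    (hrank : ∀ n : ℕ, ∃ x y : α, ¬ iterRel n x y) :
    ∃ δ : ℕ → Bool, ∀ k : ℕ, 1 ≤ k → Nonempty (OmegaPow δ k ↪o α) :=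
  statement9' hrank
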